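/- Adapted basis of Lemma 7.1: for every p ≥ 1, every m ≥ 1, and every basis ω_1, …, ω_q of V^p_{m−1}, the family ∂₀ω_1, …, ∂₀ω_q is linearly independent in V^p_m and extends to a basis of V^p_m; i.e., there exists a basis of V^p_m whose first q elements are ∂₀ω_1, …, ∂₀ω_q. -/

import Mathlib

open MvPolynomial

/-- The time derivative `∂₀` on the ghost polynomial algebra: the unique
`k`-derivation with `∂₀ X(A, l) = X(A, l + 1)`. -/
noncomputable def timeDeriv (k : Type) [CommRing k] (N : ℕ) :
    Derivation k (MvPolynomial (Fin N × ℕ) k) (MvPolynomial (Fin N × ℕ) k) :=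
  mkDerivation k (fun p : Fin N × ℕ => X (p.1, p.2 + 1))

/-- `V^p_m`: the subspace of polynomials in the ghost variables `η^{A(l)}` that are
homogeneous of degree `p` in the variables and carry exactly `m` time derivatives
(weighted-homogeneous of weight `m` for the weight `w(A, l) = l`). -/
noncomputable def Vpm (k : Type) [Field k] (N p m : ℕ) :
    Submodule k (MvPolynomial (Fin N × ℕ) k) :=
  homogeneousSubmodule (Fin N × ℕ) k p ⊓
    weightedHomogeneousSubmodule k (fun x : Fin N × ℕ => x.2) m

section Aux

variable {σ : Type*} {k : Type} [CommRing k]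

lemma weight_intCast (w : σ → ℕ) (d : σ →₀ ℕ) :
    Finsupp.weight (fun x => (w x : ℤ)) d = ((Finsupp.weight w d : ℕ) : ℤ) := by
  classical
  simp only [Finsupp.weight_apply, Finsupp.sum]
  push_cast
  rfl

lemma iwh_int_iff (w : σ → ℕ) (φ : MvPolynomial σ k) (n : ℕ) :
    IsWeightedHomogeneous (fun x => (w x : ℤ)) φ (n : ℤ) ↔ IsWeightedHomogeneous w φ n := by
  constructor <;> intro h d hd
  · have := h hd
    rw [weight_intCast] at this
    exact_mod_cast this
  · rw [weight_intCast, h hd]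

lemma wh_zero (w : σ → ℤ) (n : ℤ) : IsWeightedHomogeneous w (0 : MvPolynomial σ k) n := by
  intro d hd
  simp at hd

lemma wh_neg_eq_zero {w : σ → ℕ} {φ : MvPolynomial σ k} {c : ℤ}
    (h : IsWeightedHomogeneous (fun x => (w x : ℤ)) φ c) (hc : c < 0) : φ = 0 := by
  ext d
  rw [coeff_zero]
  by_contra hd
  have := h hd
  rw [weight_intCast] at this
  omega

lemma weight_sub_single {w : σ → ℤ} {s : σ →₀ ℕ} {i : σ} (hi : s i ≠ 0) :
    Finsupp.weight w (s - Finsupp.single i 1) = Finsupp.weight w s - w i := by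
  have h1 : Finsupp.single i 1 ≤ s := Finsupp.single_le_iff.mpr (Nat.one_le_iff_ne_zero.mpr hi)
  have h2 : (s - Finsupp.single i 1) + Finsupp.single i 1 = s := tsub_add_cancel_of_le h1
  have := congrArg (Finsupp.weight w) h2
  rw [map_add] at this
  have h3 : Finsupp.weight w (Finsupp.single i 1) = w i := by
    simp [Finsupp.weight_apply, Finsupp.sum_single_index]
  omega

/-- mkDerivation with per-variable weight shift `c` maps weighted-homogeneous
polynomials of ℤ-weight `n` to ones of weight `n + c`. -/
lemma mkDerivation_isWeightedHomogeneous (w : σ → ℤ) (c : ℤ)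
    (f : σ → MvPolynomial σ k)
    (hf : ∀ i, IsWeightedHomogeneous w (f i) (w i + c))
    {φ : MvPolynomial σ k} {n : ℤ} (hφ : IsWeightedHomogeneous w φ n) :
    IsWeightedHomogeneous w (mkDerivation k f φ) (n + c) := by
  classical
  rw [← mem_weightedHomogeneousSubmodule]
  rw [show (mkDerivation k f) φ
      = (mkDerivation k f) (∑ s ∈ φ.support, monomial s (coeff s φ)) from by
    rw [← φ.as_sum], map_sum]
  apply Submodule.sum_mem
  intro s hs
  rw [mkDerivation_monomial]
  apply Submodule.smul_mem
  rw [Finsupp.sum]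
  apply Submodule.sum_mem
  intro i hi
  have hsi : s i ≠ 0 := Finsupp.mem_support_iff.mp hi
  have hws : Finsupp.weight w s = n := hφ (MvPolynomial.mem_support_iff.mp hs)
  rw [smul_eq_mul, mem_weightedHomogeneousSubmodule]
  have hmono : IsWeightedHomogeneous w
      (monomial (s - Finsupp.single i 1) ((s i : k)) : MvPolynomial σ k) (n - w i) := by
    apply isWeightedHomogeneous_monomial
    rw [weight_sub_single hsi, hws]
  have := hmono.mul (hf i)
  convert this using 1
  ring

lemma euler_formula {φ : MvPolynomial σ k} {p : ℕ} (hφ : φ.IsHomogeneous p) :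
    mkDerivation k (fun i : σ => X i) φ = (p : k) • φ := by
  classical
  have key : ∀ s ∈ φ.support,
      mkDerivation k (fun i : σ => X i) (monomial s (coeff s φ))
        = (p : k) • monomial s (coeff s φ) := by
    intro s hs
    have hd : Finsupp.degree s = p := by
      have := hφ (MvPolynomial.mem_support_iff.mp hs)
      rw [Finsupp.degree_eq_weight_one]; exact this
    rw [mkDerivation_monomial, Finsupp.sum]
    have hterm : ∀ i ∈ s.support,
        monomial (s - Finsupp.single i 1) ((s i : k)) • (X i : MvPolynomial σ k)
          = monomial s ((s i : k)) := by
      intro i hi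
      have h1 : Finsupp.single i 1 ≤ s :=
        Finsupp.single_le_iff.mpr (Nat.one_le_iff_ne_zero.mpr (Finsupp.mem_support_iff.mp hi))
      rw [smul_eq_mul, X, monomial_mul, mul_one, tsub_add_cancel_of_le h1]
    rw [Finset.sum_congr rfl hterm, ← map_sum (monomial s) _ s.support]
    rw [← Nat.cast_sum]
    have : ∑ i ∈ s.support, s i = p := hd
    rw [this, smul_monomial, smul_monomial, smul_eq_mul, smul_eq_mul, mul_comm]
  conv_lhs => rw [show (mkDerivation k (fun i : σ => X i)) φ
    = (mkDerivation k (fun i : σ => X i)) (∑ s ∈ φ.support, monomial s (coeff s φ)) from by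
      rw [← φ.as_sum], map_sum]
  rw [Finset.sum_congr rfl key, ← Finset.smul_sum, ← φ.as_sum]

lemma isHomogeneous_iff_int (φ : MvPolynomial σ k) (n : ℕ) :
    IsWeightedHomogeneous (fun _ : σ => (1 : ℤ)) φ (n : ℤ) ↔ φ.IsHomogeneous n :=
  iwh_int_iff (fun _ : σ => (1 : ℕ)) φ n

end Aux

/-- The lowering derivation `D'` with `D' X(A,l) = l • X(A, l-1)`. -/
noncomputable def lowerDeriv (k : Type) [CommRing k] (N : ℕ) :
    Derivation k (MvPolynomial (Fin N × ℕ) k) (MvPolynomial (Fin N × ℕ) k) :=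
  mkDerivation k (fun x : Fin N × ℕ => (x.2 : k) • X (x.1, x.2 - 1))

section Specific

variable {k : Type} [Field k] {N : ℕ}

lemma timeDeriv_mem_Vpm {p m : ℕ} {f : MvPolynomial (Fin N × ℕ) k}
    (hf : f ∈ Vpm k N p m) : timeDeriv k N f ∈ Vpm k N p (m + 1) := by
  rw [Vpm, Submodule.mem_inf] at hf
  obtain ⟨h1, h2⟩ := hf
  rw [mem_homogeneousSubmodule] at h1
  rw [mem_weightedHomogeneousSubmodule] at h2
  rw [Vpm, Submodule.mem_inf]
  constructor
  · rw [mem_homogeneousSubmodule, ← isHomogeneous_iff_int]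
    have := mkDerivation_isWeightedHomogeneous (fun _ : Fin N × ℕ => (1 : ℤ)) 0
      (fun x : Fin N × ℕ => X (x.1, x.2 + 1))
      (fun i => by
        have := isWeightedHomogeneous_X (R := k) (fun _ : Fin N × ℕ => (1 : ℤ)) (i.1, i.2 + 1)
        simpa using this)
      ((isHomogeneous_iff_int f p).mpr h1)
    simpa [timeDeriv] using this
  · rw [mem_weightedHomogeneousSubmodule, ← iwh_int_iff (fun x : Fin N × ℕ => x.2)]
    have := mkDerivation_isWeightedHomogeneous (fun x : Fin N × ℕ => (x.2 : ℤ)) 1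
      (fun x : Fin N × ℕ => X (x.1, x.2 + 1))
      (fun i => by
        have := isWeightedHomogeneous_X (R := k) (fun x : Fin N × ℕ => (x.2 : ℤ)) (i.1, i.2 + 1)
        simpa using this)
      ((iwh_int_iff (fun x : Fin N × ℕ => x.2) f m).mpr h2)
    rwa [show ((m + 1 : ℕ) : ℤ) = (m : ℤ) + 1 from by push_cast; ring]

lemma lowerDeriv_wh {p m : ℕ} {f : MvPolynomial (Fin N × ℕ) k}
    (hf : f ∈ Vpm k N p m) :
    (lowerDeriv k N f).IsHomogeneous p ∧
      IsWeightedHomogeneous (fun x : Fin N × ℕ => (x.2 : ℤ)) (lowerDeriv k N f) ((m : ℤ) - 1) := by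
  rw [Vpm, Submodule.mem_inf] at hf
  obtain ⟨h1, h2⟩ := hf
  rw [mem_homogeneousSubmodule] at h1
  rw [mem_weightedHomogeneousSubmodule] at h2
  constructor
  · rw [← isHomogeneous_iff_int]
    have := mkDerivation_isWeightedHomogeneous (fun _ : Fin N × ℕ => (1 : ℤ)) 0
      (fun x : Fin N × ℕ => (x.2 : k) • X (x.1, x.2 - 1))
      (fun i => by
        show IsWeightedHomogeneous (fun _ : Fin N × ℕ => (1 : ℤ))
          ((i.2 : k) • X (i.1, i.2 - 1)) (1 + 0)
        rcases Nat.eq_zero_or_pos i.2 with h | h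
        · rw [h]
          simpa using wh_zero (k := k) (fun _ : Fin N × ℕ => (1 : ℤ)) (1 + 0)
        · apply Submodule.smul_mem (weightedHomogeneousSubmodule k _ _)
          have := isWeightedHomogeneous_X (R := k) (fun _ : Fin N × ℕ => (1 : ℤ)) (i.1, i.2 - 1)
          simpa using this)
      ((isHomogeneous_iff_int f p).mpr h1)
    simpa [lowerDeriv] using this
  · have := mkDerivation_isWeightedHomogeneous (fun x : Fin N × ℕ => (x.2 : ℤ)) (-1)
      (fun x : Fin N × ℕ => (x.2 : k) • X (x.1, x.2 - 1))
      (fun i => by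
        show IsWeightedHomogeneous (fun x : Fin N × ℕ => (x.2 : ℤ))
          ((i.2 : k) • X (i.1, i.2 - 1)) ((i.2 : ℤ) + (-1))
        rcases Nat.eq_zero_or_pos i.2 with h | h
        · rw [h]
          simpa using wh_zero (k := k) (fun x : Fin N × ℕ => (x.2 : ℤ)) _
        · apply Submodule.smul_mem (weightedHomogeneousSubmodule k _ _)
          have := isWeightedHomogeneous_X (R := k) (fun x : Fin N × ℕ => (x.2 : ℤ)) (i.1, i.2 - 1)
          have harith : ((i.2 - 1 : ℕ) : ℤ) = (i.2 : ℤ) + (-1) := by omega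
          rw [mem_weightedHomogeneousSubmodule, ← harith]
          exact this)
      ((iwh_int_iff (fun x : Fin N × ℕ => x.2) f m).mpr h2)
    rwa [show (m : ℤ) - 1 = (m : ℤ) + -1 from by ring]

lemma lowerDeriv_mem_Vpm {p m : ℕ} {f : MvPolynomial (Fin N × ℕ) k}
    (hf : f ∈ Vpm k N p (m + 1)) : lowerDeriv k N f ∈ Vpm k N p m := by
  obtain ⟨h1, h2⟩ := lowerDeriv_wh hf
  rw [Vpm, Submodule.mem_inf]
  refine ⟨h1, ?_⟩
  rw [mem_weightedHomogeneousSubmodule, ← iwh_int_iff (fun x : Fin N × ℕ => x.2)]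
  convert h2 using 2
  push_cast
  ring

lemma lowerDeriv_zero_wt {p : ℕ} {f : MvPolynomial (Fin N × ℕ) k}
    (hf : f ∈ Vpm k N p 0) : lowerDeriv k N f = 0 := by
  obtain ⟨-, h2⟩ := lowerDeriv_wh hf
  exact wh_neg_eq_zero h2 (by norm_num)

lemma bracket_lower_time :
    ⁅lowerDeriv k N, timeDeriv k N⁆ = mkDerivation k (fun i : Fin N × ℕ => X i) := by
  apply derivation_ext
  intro i
  rw [Derivation.commutator_apply, mkDerivation_X]
  show lowerDeriv k N (timeDeriv k N (X i)) - timeDeriv k N (lowerDeriv k N (X i)) = X i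
  have h1 : timeDeriv k N (X i) = X (i.1, i.2 + 1) := by
    simp [timeDeriv]
  have h2 : lowerDeriv k N (X i) = (i.2 : k) • X (i.1, i.2 - 1) := by
    simp [lowerDeriv]
  have h3 : lowerDeriv k N (X (i.1, i.2 + 1)) = ((i.2 + 1 : ℕ) : k) • X (i.1, i.2) := by
    simp [lowerDeriv]
  have h4 : timeDeriv k N ((i.2 : k) • X (i.1, i.2 - 1))
      = (i.2 : k) • X (i.1, i.2 - 1 + 1) := by
    rw [Derivation.map_smul]
    congr 1
    simp [timeDeriv]
  rw [h1, h2, h3, h4]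
  rcases i with ⟨A, l⟩
  rcases l with - | n
  · simp
  · simp only [Nat.succ_sub_one]
    rw [← sub_smul]
    have : ((n + 1 + 1 : ℕ) : k) - ((n + 1 : ℕ) : k) = 1 := by push_cast; ring
    rw [this, one_smul]

lemma lower_time_comm {p : ℕ} {f : MvPolynomial (Fin N × ℕ) k} (hf : f.IsHomogeneous p) :
    lowerDeriv k N (timeDeriv k N f) - timeDeriv k N (lowerDeriv k N f) = (p : k) • f := by
  have := congrArg (fun D : Derivation k (MvPolynomial (Fin N × ℕ) k)
      (MvPolynomial (Fin N × ℕ) k) => D f) (bracket_lower_time (k := k) (N := N))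
  simp only [Derivation.commutator_apply] at this
  rw [this, euler_formula hf]

end Specific

section Inj

variable {k : Type} [Field k] [CharZero k] {N : ℕ}

lemma timeDeriv_injOn_Vpm {p m : ℕ} (hp : 1 ≤ p) {f : MvPolynomial (Fin N × ℕ) k}
    (hf : f ∈ Vpm k N p m) (h0 : timeDeriv k N f = 0) : f = 0 := by
  set L := lowerDeriv k N with hL
  set T := timeDeriv k N with hT
  set g : ℕ → MvPolynomial (Fin N × ℕ) k := fun j => (⇑L)^[j] f with hg
  have hgsucc : ∀ j, g (j + 1) = L (g j) := by
    intro j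
    rw [hg]
    simp [Function.iterate_succ_apply']
  have hgmem : ∀ j, g j ∈ Vpm k N p (m - j) := by
    intro j
    induction j with
    | zero => simpa using (show g 0 ∈ Vpm k N p m from hf)
    | succ j ih =>
      rw [hgsucc]
      rcases Nat.eq_zero_or_pos (m - j) with h | h
      · have : g j ∈ Vpm k N p 0 := by rwa [h] at ih
        rw [lowerDeriv_zero_wt this]
        exact Submodule.zero_mem _
      · obtain ⟨n, hn⟩ := Nat.exists_eq_add_of_lt (Nat.lt_of_lt_of_le Nat.zero_lt_one h)
        have : m - (j + 1) = (m - j) - 1 := by omega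
        rw [this]
        have hmem : g j ∈ Vpm k N p ((m - j - 1) + 1) := by
          have : m - j - 1 + 1 = m - j := by omega
          rwa [this]
        exact lowerDeriv_mem_Vpm hmem
  have hghom : ∀ j, (g j).IsHomogeneous p := fun j => (hgmem j).1
  have hrec : ∀ j, T (g (j + 1)) = (-(((j : k) + 1) * p)) • g j := by
    intro j
    induction j with
    | zero =>
      rw [hgsucc]
      have hc := lower_time_comm (k := k) (N := N) (hghom 0)
      rw [show g 0 = f from rfl, ← hT, ← hL, h0, map_zero, zero_sub] at hc
      have h6 : T (L f) = -((p : k) • f) := neg_eq_iff_eq_neg.mp hc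
      rw [show g 0 = f from rfl, h6, ← neg_smul]
      congr 1
      norm_num
    | succ j ih =>
      rw [hgsucc]
      have hcomm := lower_time_comm (k := k) (N := N) (hghom (j + 1))
      rw [← hT, ← hL] at hcomm
      have heq : T (L (g (j + 1))) = L (T (g (j + 1))) - (p : k) • g (j + 1) := by
        rw [← hcomm]; abel
      rw [heq, ih, Derivation.map_smul, ← hgsucc, ← sub_smul]
      congr 1
      push_cast
      ring
  have hgtop : g (m + 1) = 0 := by
    rw [hgsucc]
    apply lowerDeriv_zero_wt
    have := hgmem m
    simpa using this
  by_contra hne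
  have hall : ∀ j, g j ≠ 0 := by
    intro j
    induction j with
    | zero => exact hne
    | succ j ih =>
      intro hcon
      have := hrec j
      rw [hcon, map_zero] at this
      have hc : (-(((j : k) + 1) * p)) ≠ 0 := by
        apply neg_ne_zero.mpr
        apply mul_ne_zero
        · exact Nat.cast_add_one_ne_zero j
        · exact Nat.cast_ne_zero.mpr (by omega)
      rcases smul_eq_zero.mp this.symm with h | h
      · exact hc h
      · exact ih h
  exact hall (m + 1) hgtop

end Inj

lemma Vpm_fd (k : Type) [Field k] (N p m : ℕ) : FiniteDimensional k (Vpm k N p m) := by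
  classical
  set b : (Fin N × ℕ) →₀ ℕ :=
    ∑ x ∈ (Finset.univ ×ˢ Finset.range (m + 1)), Finsupp.single x p with hb
  have hle : Vpm k N p m ≤ Submodule.span k
      ((fun d => (monomial d (1 : k) : MvPolynomial (Fin N × ℕ) k)) '' ↑(Finset.Iic b)) := by
    intro φ hφ
    rw [Vpm, Submodule.mem_inf, mem_homogeneousSubmodule,
      mem_weightedHomogeneousSubmodule] at hφ
    obtain ⟨h1, h2⟩ := hφ
    rw [φ.as_sum]
    apply Submodule.sum_mem
    intro d hd
    have hc : coeff d φ ≠ 0 := MvPolynomial.mem_support_iff.mp hd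
    have hdeg : Finsupp.degree d = p := by
      have := h1 hc
      rw [Finsupp.degree_eq_weight_one]; exact this
    have hwt : Finsupp.weight (fun x : Fin N × ℕ => x.2) d = m := h2 hc
    have hdb : d ≤ b := by
      intro x
      rcases Nat.eq_zero_or_pos (d x) with h | h
      · simp [h]
      have hxd : x ∈ d.support := Finsupp.mem_support_iff.mpr (by omega)
      have hdx : d x ≤ p := by
        rw [← hdeg]
        exact Finset.single_le_sum (f := fun i => d i) (fun i _ => Nat.zero_le _) hxd
      have hx2 : x.2 ≤ m := by
        have h' := Finsupp.le_weight_of_ne_zero' (fun x : Fin N × ℕ => x.2)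
          (f := d) (by omega : d x ≠ 0)
        rw [hwt] at h'
        exact h'
      have hbx : b x = p := by
        rw [hb, Finsupp.finset_sum_apply]
        have : ∀ x' ∈ Finset.univ ×ˢ Finset.range (m + 1),
            Finsupp.single x' p x = if x' = x then p else 0 := by
          intro x' _
          rw [Finsupp.single_apply]
        rw [Finset.sum_congr rfl this, Finset.sum_ite_eq' _ x (fun _ => p),
          if_pos (by simp [Finset.mem_product, Finset.mem_range]; omega)]
      omega
    have : (monomial d (coeff d φ) : MvPolynomial (Fin N × ℕ) k)
        = coeff d φ • monomial d 1 := by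
      rw [smul_monomial, smul_eq_mul, mul_one]
    rw [this]
    exact Submodule.smul_mem _ _ (Submodule.subset_span
      ⟨d, by simpa [Finset.mem_Iic] using hdb, rfl⟩)
  have : FiniteDimensional k (Submodule.span k
      ((fun d => (monomial d (1 : k) : MvPolynomial (Fin N × ℕ) k)) '' ↑(Finset.Iic b))) :=
    FiniteDimensional.span_of_finite k ((Finset.Iic b).finite_toSet.image _)
  exact Submodule.finiteDimensional_of_le hle



lemma extend_indep_to_basis {K V : Type*} [Field K] [AddCommGroup V] [Module K V]
    [FiniteDimensional K V] {q : ℕ} (v : Fin q → V) (hv : LinearIndependent K v) :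
    ∃ (r : ℕ) (e : Fin (q + r) → V), LinearIndependent K e ∧
      Submodule.span K (Set.range e) = ⊤ ∧
      ∀ i : Fin q, e (Fin.castLE (Nat.le_add_right q r) i) = v i := by
  classical
  obtain ⟨C, hC⟩ := Submodule.exists_isCompl (Submodule.span K (Set.range v))
  haveI : Module.Free K C := Module.Free.of_divisionRing K C
  set r := Module.finrank K C with hr
  let c : Module.Basis (Fin r) K C := Module.finBasis K C
  set e : Fin q ⊕ Fin r → V := Sum.elim v (fun j => (c j : V)) with he
  have hspanc : Submodule.span K (Set.range fun j : Fin r => ((c j : V))) = C := by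
    rw [show (Set.range fun j : Fin r => ((c j : V))) = C.subtype '' Set.range c from by
      rw [← Set.range_comp]; rfl]
    rw [Submodule.span_image, c.span_eq, Submodule.map_subtype_top]
  have hinde : LinearIndependent K e := by
    apply LinearIndependent.sum_type hv
    · exact c.linearIndependent.map' C.subtype (Submodule.ker_subtype C)
    · rw [hspanc]
      exact hC.disjoint
  have hspane : Submodule.span K (Set.range e) = ⊤ := by
    rw [he, Set.Sum.elim_range, Submodule.span_union, hspanc]
    exact codisjoint_iff.mp hC.codisjoint
  refine ⟨r, e ∘ finSumFinEquiv.symm, hinde.comp _ finSumFinEquiv.symm.injective, ?_, ?_⟩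
  · rw [Set.range_comp, finSumFinEquiv.symm.surjective.range_eq, Set.image_univ]
    exact hspane
  · intro i
    have hcast : finSumFinEquiv.symm (Fin.castLE (Nat.le_add_right q r) i) = Sum.inl i := by
      rw [show Fin.castLE (Nat.le_add_right q r) i = Fin.castAdd r i from rfl]
      exact finSumFinEquiv_symm_apply_castAdd i
    simp only [Function.comp_apply, hcast, he, Sum.elim_inl]

set_option maxHeartbeats 2000000 in
set_option synthInstance.maxHeartbeats 400000 in
theorem timeDeriv_basis_extends
    (k : Type) [Field k] [CharZero k] (N : ℕ) (hN : 1 ≤ N) (p : ℕ) (hp : 1 ≤ p)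
    (m : ℕ) (q : ℕ) (ω : Fin q → MvPolynomial (Fin N × ℕ) k)
    (hmem : ∀ i, ω i ∈ Vpm k N p m)
    (hind : LinearIndependent k ω)
    (hspan : Submodule.span k (Set.range ω) = Vpm k N p m) :
    LinearIndependent k (fun i => timeDeriv k N (ω i)) ∧
    ∃ (Q : ℕ) (hQ : q ≤ Q) (ω' : Fin Q → MvPolynomial (Fin N × ℕ) k),
      (∀ j, ω' j ∈ Vpm k N p (m + 1)) ∧
      LinearIndependent k ω' ∧
      Submodule.span k (Set.range ω') = Vpm k N p (m + 1) ∧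
      ∀ i : Fin q, ω' (Fin.castLE hQ i) = timeDeriv k N (ω i) := by
  classical
  set T : MvPolynomial (Fin N × ℕ) k →ₗ[k] MvPolynomial (Fin N × ℕ) k :=
    ((timeDeriv k N : MvPolynomial (Fin N × ℕ) k →ₗ[k] MvPolynomial (Fin N × ℕ) k)) with hT
  have hTeq : ∀ x, T x = timeDeriv k N x := fun x => by
    rw [hT, Derivation.coeFn_coe]
  have hmap : ∀ i, timeDeriv k N (ω i) ∈ Vpm k N p (m + 1) :=
    fun i => timeDeriv_mem_Vpm (hmem i)
  have hdisj : Disjoint (Vpm k N p m) (LinearMap.ker T) := by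
    rw [Submodule.disjoint_def]
    intro x hx hker
    have h0 : timeDeriv k N x = 0 := by
      rw [← hTeq]
      exact LinearMap.mem_ker.mp hker
    exact timeDeriv_injOn_Vpm hp hx h0
  have hindT : LinearIndependent k (fun i => timeDeriv k N (ω i)) := by
    have h := LinearIndependent.map hind (f := T) (by rw [hspan]; exact hdisj)
    have he : (⇑T ∘ ω) = fun i => timeDeriv k N (ω i) := by
      funext i
      exact hTeq (ω i)
    rwa [he] at h
  refine ⟨hindT, ?_⟩
  set W := Vpm k N p (m + 1) with hW
  haveI : FiniteDimensional k W := Vpm_fd k N p (m + 1)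
  set v : Fin q → W := fun i => ⟨timeDeriv k N (ω i), hmap i⟩ with hv
  have hindv : LinearIndependent k v := by
    apply LinearIndependent.of_comp W.subtype
    exact hindT
  obtain ⟨r, e, hinde, hspane, hfirst⟩ := extend_indep_to_basis v hindv
  refine ⟨q + r, Nat.le_add_right q r, fun j => W.subtype (e j), ?_, ?_, ?_, ?_⟩
  · intro j
    exact (e j).2
  · exact hinde.map' W.subtype (Submodule.ker_subtype W)
  · rw [show (Set.range fun j => W.subtype (e j)) = W.subtype '' Set.range e from by
      rw [← Set.range_comp]; rfl]
    rw [Submodule.span_image, hspane, Submodule.map_subtype_top]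
  · intro i
    show W.subtype (e (Fin.castLE (Nat.le_add_right q r) i)) = _
    rw [hfirst i]
    rfl
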